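/- Consider the 2-SEP: configurations are η : ZMod N → {0,1,2} and the jump rates are c_{x,y}(η) = χ⁺(η(x)) χ⁻(η(y)) for nearest-neighbour ordered pairs (x,y), where χ⁺(a) = 1 if a > 0 and 0 otherwise, and χ⁻(a) = 1 if a < 2 and 0 otherwise. Let D⁺_η(x,x+1) = 1 if η(x) = 2 and η(x+1) = 1 (0 otherwise), D⁻_η(x,x+1) = 1 if η(x) = 1 and η(x+1) = 2 (0 otherwise), and D_η = D⁺_η − D⁻_η. Then: (i) the instantaneous current j_η(x,x+1) := c_{x,x+1}(η) − c_{x+1,x}(η) satisfies j_η(x,x+1) = χ⁺(η(x)) − χ⁺(η(x+1)) + D_η(x,x+1) for every η and x; (ii) with h(η) := −χ⁺(η(0)) + ∑_{x=1}^{N−1} (x/N) D_η(x̄, x̄+1) and C(η) := (1/N) ∑_{x ∈ ZMod N} D_η(x, x+1), one has j_η(x,x+1) = τ_{x+1}h(η) − τ_x h(η) + C(η) for every η and every x ∈ ZMod N. -/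

import Mathlib

lemma aux_fin3 (a b : Fin 3) :
    (if 0 < (a : ℕ) then (1:ℝ) else 0) * (if (b : ℕ) < 2 then 1 else 0)
      - (if 0 < (b : ℕ) then (1:ℝ) else 0) * (if (a : ℕ) < 2 then 1 else 0)
    = (if 0 < (a : ℕ) then (1:ℝ) else 0) - (if 0 < (b : ℕ) then 1 else 0)
      + ((if (a : ℕ) = 2 ∧ (b : ℕ) = 1 then (1:ℝ) else 0)
        - (if (a : ℕ) = 1 ∧ (b : ℕ) = 2 then (1:ℝ) else 0)) := by
  fin_cases a <;> fin_cases b <;> norm_num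

lemma sum_univ_zmod {N : ℕ} [NeZero N] (g : ZMod N → ℝ) :
    ∑ y : ZMod N, g y = ∑ k ∈ Finset.range N, g (k : ZMod N) := by
  refine Finset.sum_nbij' (fun y => (y : ZMod N).val) (fun k => ((k : ℕ) : ZMod N))
    ?_ ?_ ?_ ?_ ?_ <;> intro a ha
  · simp [Finset.mem_range, ZMod.val_lt]
  · simp
  · simp [ZMod.natCast_zmod_val]
  · simp only [Finset.mem_range] at ha
    simp [ZMod.val_cast_of_lt ha]
  · simp [ZMod.natCast_zmod_val]

lemma sum_key {N : ℕ} [NeZero N] (hN : 2 ≤ N) (g : ZMod N → ℝ) :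
    ∑ k ∈ Finset.Icc 1 (N - 1), ((k : ℝ) / N) * (g ((k : ZMod N) + 1) - g (k : ZMod N))
      = g 0 - (1 / (N : ℝ)) * ∑ y : ZMod N, g y := by
  have hN0 : (N : ℝ) ≠ 0 := Nat.cast_ne_zero.mpr (NeZero.ne N)
  have hIcc : Finset.Icc 1 (N - 1) = Finset.Ico 1 N := by
    ext m; simp only [Finset.mem_Icc, Finset.mem_Ico]; omega
  set G : ℕ → ℝ := fun k => g (k : ZMod N) with hG
  set F : ℕ → ℝ := fun k => (k : ℝ) / N * G k with hF
  have hGN : G N = g 0 := by simp [hG]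
  have hG0 : G 0 = g 0 := by simp [hG]
  rw [hIcc, Finset.sum_Ico_eq_sum_range]
  have hstep : ∀ k ∈ Finset.range (N - 1),
      (((1 + k : ℕ) : ℝ) / N) * (g (((1 + k : ℕ) : ZMod N) + 1) - g ((1 + k : ℕ) : ZMod N))
      = (F (1 + (k + 1)) - F (1 + k)) - (1 / N) * G (1 + (k + 1)) := by
    intro k _
    have hcast : (((1 + k : ℕ) : ZMod N) + 1) = ((1 + (k + 1) : ℕ) : ZMod N) := by
      push_cast; ring
    rw [hcast]
    simp only [hF, hG]
    push_cast
    ring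
  rw [Finset.sum_congr rfl hstep, Finset.sum_sub_distrib]
  have htel : ∑ k ∈ Finset.range (N - 1), (F (1 + (k + 1)) - F (1 + k))
      = F (1 + (N - 1)) - F (1 + 0) :=
    Finset.sum_range_sub (fun k => F (1 + k)) (N - 1)
  rw [htel]
  have h1N : 1 + (N - 1) = N := by omega
  rw [h1N]
  have hFN : F N = g 0 := by
    show (N : ℝ) / N * G N = g 0
    rw [div_self hN0, one_mul, hGN]
  have hF1 : F (1 + 0) = (1 / N) * G 1 := by
    show ((1 + 0 : ℕ) : ℝ) / N * G (1 + 0) = (1 / N) * G 1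
    norm_num
  rw [hFN, hF1]
  have hsum2 : ∑ k ∈ Finset.range (N - 1), (1 / (N : ℝ)) * G (1 + (k + 1))
      = (1 / (N : ℝ)) * ∑ k ∈ Finset.range (N - 1), G (1 + (k + 1)) := by
    rw [Finset.mul_sum]
  rw [hsum2, sum_univ_zmod g]
  have hshift : ∑ k ∈ Finset.range (N - 1), G (1 + (k + 1))
      = (∑ k ∈ Finset.range N, G k) - G 1 := by
    have h1 : N - 1 = (N - 2) + 1 := by omega
    have h2 : N = (N - 2) + 1 + 1 := by omega
    rw [h1, Finset.sum_range_succ]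
    have hN2 : G (1 + ((N - 2) + 1)) = g 0 := by
      have : 1 + ((N - 2) + 1) = N := by omega
      rw [this, hGN]
    rw [hN2]
    conv_rhs => rw [h2, Finset.sum_range_succ', Finset.sum_range_succ']
    have hc : ∀ k ∈ Finset.range (N - 2), G (1 + (k + 1)) = G (k + 1 + 1) := by
      intro k _; congr 1; omega
    rw [Finset.sum_congr rfl hc]
    simp only [zero_add, hG0]
    ring
  rw [hshift]
  ring

theorem stmt_6 {N : ℕ} [NeZero N] (hN : 2 ≤ N) :
    let χp : Fin 3 → ℝ := fun a => if 0 < (a : ℕ) then 1 else 0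
    let χm : Fin 3 → ℝ := fun a => if (a : ℕ) < 2 then 1 else 0
    let D : (ZMod N → Fin 3) → ZMod N → ℝ := fun η x =>
      (if (η x : ℕ) = 2 ∧ (η (x + 1) : ℕ) = 1 then (1 : ℝ) else 0)
        - (if (η x : ℕ) = 1 ∧ (η (x + 1) : ℕ) = 2 then (1 : ℝ) else 0)
    let j : (ZMod N → Fin 3) → ZMod N → ℝ := fun η x =>
      χp (η x) * χm (η (x + 1)) - χp (η (x + 1)) * χm (η x)
    let h : (ZMod N → Fin 3) → ℝ := fun η =>
      -χp (η 0) + ∑ k ∈ Finset.Icc 1 (N - 1), ((k : ℝ) / N) * D η (k : ZMod N)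
    let C : (ZMod N → Fin 3) → ℝ := fun η => (1 / (N : ℝ)) * ∑ x : ZMod N, D η x
    (∀ (η : ZMod N → Fin 3) (x : ZMod N),
      j η x = χp (η x) - χp (η (x + 1)) + D η x) ∧
    (∀ (η : ZMod N → Fin 3) (x : ZMod N),
      j η x = h (fun w => η (w + (x + 1))) - h (fun w => η (w + x)) + C η) := by
  intro χp χm D j h C
  have part1 : ∀ (η : ZMod N → Fin 3) (x : ZMod N),
      j η x = χp (η x) - χp (η (x + 1)) + D η x := by
    intro η x
    exact aux_fin3 (η x) (η (x + 1))
  refine ⟨part1, ?_⟩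
  intro η x
  have hDshift : ∀ (z : ZMod N) (y : ZMod N), D (fun w => η (w + z)) y = D η (z + y) := by
    intro z y
    simp only [D, show y + z = z + y from add_comm _ _,
      show y + 1 + z = z + y + 1 from by ring]
  set g : ZMod N → ℝ := fun y => D η (x + y) with hg
  have hsum : ∑ k ∈ Finset.Icc 1 (N - 1), ((k : ℝ) / N) * (g ((k : ZMod N) + 1) - g (k : ZMod N))
      = g 0 - (1 / (N : ℝ)) * ∑ y : ZMod N, g y := sum_key hN g
  have hgsum : ∑ y : ZMod N, g y = ∑ y : ZMod N, D η y := by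
    rw [hg]
    exact Fintype.sum_equiv (Equiv.addLeft x) _ _ (fun y => by simp [Equiv.addLeft])
  have hh1 : h (fun w => η (w + (x + 1)))
      = -χp (η (x + 1)) + ∑ k ∈ Finset.Icc 1 (N - 1), ((k : ℝ) / N) * g ((k : ZMod N) + 1) := by
    simp only [h]
    congr 1
    · simp
    · refine Finset.sum_congr rfl (fun k _ => ?_)
      rw [hDshift (x + 1) (k : ZMod N), hg]
      simp only
      congr 2
      ring
  have hh2 : h (fun w => η (w + x))
      = -χp (η x) + ∑ k ∈ Finset.Icc 1 (N - 1), ((k : ℝ) / N) * g (k : ZMod N) := by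
    simp only [h]
    congr 1
    · simp
    · exact Finset.sum_congr rfl (fun k _ => by rw [hDshift x (k : ZMod N), hg])
  have hg0 : g 0 = D η x := by simp [hg]
  rw [part1 η x, hh1, hh2]
  have hsplit : ∑ k ∈ Finset.Icc 1 (N - 1), ((k : ℝ) / N) * (g ((k : ZMod N) + 1) - g (k : ZMod N))
      = (∑ k ∈ Finset.Icc 1 (N - 1), ((k : ℝ) / N) * g ((k : ZMod N) + 1))
        - ∑ k ∈ Finset.Icc 1 (N - 1), ((k : ℝ) / N) * g (k : ZMod N) := by
    rw [← Finset.sum_sub_distrib]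
    exact Finset.sum_congr rfl (fun k _ => by ring)
  rw [hsplit, hgsum, hg0] at hsum
  simp only [C]
  linarith [hsum]
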